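/- Let E be a real inner product space and let v_1, …, v_k ∈ E be unit vectors such that ⟨v_i, v_j⟩ ≥ ε for all i, j and some ε > 0. Then there exists a unique unit vector u ∈ E maximizing min_{1 ≤ i ≤ k} ⟨u, v_i⟩ over all unit vectors, and this maximizer u lies in the convex cone generated by v_1, …, v_k, i.e. u = (Σ λ_i v_i)/‖Σ λ_i v_i‖ for some nonnegative weights λ_1, …, λ_k not all zero (equivalently, u is a normalized convex combination of the v_i). -/

import Mathlib

open scoped RealInnerProductSpace

/-- The minimum inner product of `w` with the members of a finite family of
vectors `v : Fin k → E` (for `k > 0`). -/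
noncomputable def minInner {E : Type*} [NormedAddCommGroup E]
    [InnerProductSpace ℝ E] {k : ℕ} (hk : 0 < k) (v : Fin k → E) (w : E) : ℝ :=
  Finset.univ.inf' (Finset.univ_nonempty_iff.mpr (Fin.pos_iff_nonempty.mp hk))
    fun i => ⟪w, v i⟫

/-- Variational inequality for a minimal-norm point of a convex set. -/
lemma min_norm_variational {E : Type*} [NormedAddCommGroup E]
    [InnerProductSpace ℝ E] {K : Set E} (hconv : Convex ℝ K) {p : E} (hp : p ∈ K)
    (hmin : ∀ c ∈ K, ‖p‖ ≤ ‖c‖) {c : E} (hc : c ∈ K) : ‖p‖ ^ 2 ≤ ⟪p, c⟫ := by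
  by_contra h
  push_neg at h
  set a : ℝ := ⟪p, c - p⟫ with ha
  have ha' : a = ⟪p, c⟫ - ‖p‖ ^ 2 := by
    rw [ha, inner_sub_right, real_inner_self_eq_norm_sq]
  have haneg : a < 0 := by rw [ha']; linarith
  set b : ℝ := ‖c - p‖ ^ 2 with hb
  have hbpos : 0 < b := by
    rcases eq_or_ne c p with rfl | hne
    · simp [ha] at haneg
    · have hcp : c - p ≠ 0 := sub_ne_zero.mpr hne
      have := norm_pos_iff.mpr hcp
      positivity
  set t : ℝ := min 1 (-a / b) with ht
  have htpos : 0 < t := lt_min one_pos (div_pos (neg_pos.mpr haneg) hbpos)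
  have ht1 : t ≤ 1 := min_le_left _ _
  have htb : t * b ≤ -a := by
    have h2 : t ≤ -a / b := min_le_right _ _
    calc t * b ≤ (-a / b) * b := by nlinarith
      _ = -a := by field_simp
  have hq : p + t • (c - p) ∈ K := by
    have hcomb := hconv hp hc (by linarith : (0 : ℝ) ≤ 1 - t) htpos.le (by ring)
    have : p + t • (c - p) = (1 - t) • p + t • c := by module
    rw [this]; exact hcomb
  have h1 : ‖p‖ ≤ ‖p + t • (c - p)‖ := hmin _ hq
  have h2 : ‖p + t • (c - p)‖ ^ 2 = ‖p‖ ^ 2 + 2 * (t * a) + t ^ 2 * b := by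
    rw [norm_add_sq_real, real_inner_smul_right, norm_smul]
    rw [mul_pow, Real.norm_eq_abs, sq_abs]
  nlinarith [norm_nonneg p, norm_nonneg (p + t • (c - p))]

/-- Gastwirth's theorem: if `v₁, …, v_k` are unit vectors whose pairwise inner
products are bounded below by some `ε > 0`, then there is a unique unit vector
maximizing the minimum inner product with the family, and this maximizer is a
normalized nonnegative (convex-cone) combination of the `vᵢ`. -/
theorem mert_exists_unique_convex_combination {E : Type*} [NormedAddCommGroup E]
    [InnerProductSpace ℝ E] {k : ℕ} (hk : 0 < k) (v : Fin k → E)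
    (hv : ∀ i, ‖v i‖ = 1) (ε : ℝ) (hε : 0 < ε)
    (hcorr : ∀ i j, ε ≤ ⟪v i, v j⟫) :
    (∃! u : E, ‖u‖ = 1 ∧
        ∀ w : E, ‖w‖ = 1 → minInner hk v w ≤ minInner hk v u) ∧
    ∀ u : E, (‖u‖ = 1 ∧
        ∀ w : E, ‖w‖ = 1 → minInner hk v w ≤ minInner hk v u) →
      ∃ lam : Fin k → ℝ, (∀ i, 0 ≤ lam i) ∧ (∃ i, lam i ≠ 0) ∧
        u = ‖∑ i, lam i • v i‖⁻¹ • ∑ i, lam i • v i := by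
  classical
  have hune : Finset.univ.Nonempty :=
    Finset.univ_nonempty_iff.mpr (Fin.pos_iff_nonempty.mp hk)
  set f : (Fin k → ℝ) → E := fun lam => ∑ i, lam i • v i with hf
  have hfcont : Continuous f := by
    apply continuous_finset_sum
    intro i _
    exact (continuous_apply i).smul continuous_const
  set K : Set E := f '' stdSimplex ℝ (Fin k) with hK
  have hconv : Convex ℝ K := by
    apply Convex.is_linear_image (convex_stdSimplex ℝ (Fin k))
    constructor
    · intro x y; simp [hf, add_smul, Finset.sum_add_distrib]
    · intro c x; simp [hf, smul_smul, Finset.smul_sum]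
  have hcomp : IsCompact K := (isCompact_stdSimplex ℝ (Fin k)).image hfcont
  have hvK : ∀ i, v i ∈ K := by
    intro i
    refine ⟨Pi.single i 1, single_mem_stdSimplex ℝ i, ?_⟩
    simp [hf, Pi.single_apply]
  have hne : K.Nonempty := ⟨v ⟨0, hk⟩, hvK _⟩
  have hKinner : ∀ c ∈ K, ∀ j, ε ≤ ⟪c, v j⟫ := by
    rintro c ⟨lam, hlam, rfl⟩ j
    rw [hf]
    simp only
    rw [sum_inner]
    have hterm : ∀ i ∈ Finset.univ, lam i * ε ≤ ⟪lam i • v i, v j⟫ := by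
      intro i _
      rw [real_inner_smul_left]
      exact mul_le_mul_of_nonneg_left (hcorr i j) (hlam.1 i)
    calc ε = ∑ i, lam i * ε := by rw [← Finset.sum_mul, hlam.2, one_mul]
      _ ≤ _ := Finset.sum_le_sum hterm
  obtain ⟨p, hpK, hpmin⟩ := hcomp.exists_isMinOn hne continuous_norm.continuousOn
  have hpmin' : ∀ c ∈ K, ‖p‖ ≤ ‖c‖ := fun c hc => hpmin hc
  obtain ⟨lam, hlamS, hplam⟩ := hpK
  have hpK' : p ∈ K := ⟨lam, hlamS, hplam⟩
  have hinner_f : ∀ w : E, ⟪w, p⟫ = ∑ i, lam i * ⟪w, v i⟫ := by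
    intro w
    rw [← hplam, hf]
    simp only
    rw [inner_sum]
    exact Finset.sum_congr rfl fun i _ => real_inner_smul_right w (v i) (lam i)
  -- p ≠ 0
  have hp2 : ε ≤ ⟪p, p⟫ := by
    rw [hinner_f p]
    calc ε = ∑ i, lam i * ε := by rw [← Finset.sum_mul, hlamS.2, one_mul]
      _ ≤ _ := Finset.sum_le_sum fun i _ =>
          mul_le_mul_of_nonneg_left (hKinner p hpK' i) (hlamS.1 i)
  have hppos : 0 < ‖p‖ := by
    by_contra h
    push_neg at h
    have : p = 0 := norm_le_zero_iff.mp h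
    rw [this] at hp2; simp at hp2; linarith
  have hpne : p ≠ 0 := fun h => by rw [h] at hppos; simp at hppos
  -- variational inequality
  have hvar : ∀ c ∈ K, ‖p‖ ^ 2 ≤ ⟪p, c⟫ := fun c hc =>
    min_norm_variational hconv hpK' hpmin' hc
  -- the maximizer
  set u : E := ‖p‖⁻¹ • p with hu
  have hunorm : ‖u‖ = 1 := norm_smul_inv_norm hpne
  have huinner : ∀ i, ‖p‖ ≤ ⟪u, v i⟫ := by
    intro i
    rw [hu, real_inner_smul_left]
    have h3 : ‖p‖⁻¹ * ‖p‖ ^ 2 ≤ ‖p‖⁻¹ * ⟪p, v i⟫ :=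
      mul_le_mul_of_nonneg_left (hvar (v i) (hvK i)) (by positivity)
    have h4 : ‖p‖⁻¹ * ‖p‖ ^ 2 = ‖p‖ := by
      rw [sq, ← mul_assoc, inv_mul_cancel₀ hppos.ne', one_mul]
    linarith
  have humin : ‖p‖ ≤ minInner hk v u := Finset.le_inf' hune _ fun i _ => huinner i
  -- upper bound for any unit vector
  have hupper : ∀ w : E, ‖w‖ = 1 → minInner hk v w ≤ ‖p‖ := by
    intro w hw
    have h1 : minInner hk v w ≤ ⟪w, p⟫ := by
      rw [hinner_f w]
      calc minInner hk v w = ∑ i, lam i * minInner hk v w := by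
            rw [← Finset.sum_mul, hlamS.2, one_mul]
        _ ≤ _ := Finset.sum_le_sum fun i _ =>
            mul_le_mul_of_nonneg_left (Finset.inf'_le _ (Finset.mem_univ i)) (hlamS.1 i)
    calc minInner hk v w ≤ ⟪w, p⟫ := h1
      _ ≤ ‖w‖ * ‖p‖ := real_inner_le_norm w p
      _ = ‖p‖ := by rw [hw, one_mul]
  have hmaxu : ∀ w : E, ‖w‖ = 1 → minInner hk v w ≤ minInner hk v u :=
    fun w hw => (hupper w hw).trans humin
  -- uniqueness: any maximizer equals u
  have hkey : ∀ u' : E, ‖u'‖ = 1 →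
      (∀ w : E, ‖w‖ = 1 → minInner hk v w ≤ minInner hk v u') → u' = u := by
    intro u' hu'norm hu'max
    have hm : ‖p‖ ≤ minInner hk v u' := humin.trans (hu'max u hunorm)
    have hvi : ∀ i, ‖p‖ ≤ ⟪u', v i⟫ := fun i =>
      hm.trans (Finset.inf'_le _ (Finset.mem_univ i))
    have h1 : ‖p‖ ≤ ⟪u', p⟫ := by
      rw [hinner_f u']
      calc ‖p‖ = ∑ i, lam i * ‖p‖ := by rw [← Finset.sum_mul, hlamS.2, one_mul]
        _ ≤ _ := Finset.sum_le_sum fun i _ =>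
            mul_le_mul_of_nonneg_left (hvi i) (hlamS.1 i)
    have h2 : ⟪u', p⟫ ≤ ‖u'‖ * ‖p‖ := real_inner_le_norm u' p
    rw [hu'norm, one_mul] at h2
    have heq : ⟪u', p⟫ = ‖u'‖ * ‖p‖ := by rw [hu'norm, one_mul]; linarith
    have := inner_eq_norm_mul_iff_real.mp heq
    rw [hu'norm, one_smul] at this
    calc u' = ‖p‖⁻¹ • (‖p‖ • u') := by
          rw [smul_smul, inv_mul_cancel₀ hppos.ne', one_smul]
      _ = ‖p‖⁻¹ • p := by rw [this]
      _ = u := hu.symm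
  constructor
  · exact ⟨u, ⟨hunorm, hmaxu⟩, fun u' h => hkey u' h.1 h.2⟩
  · rintro u' ⟨h1, h2⟩
    have hu'u : u' = u := hkey u' h1 h2
    refine ⟨lam, hlamS.1, ?_, ?_⟩
    · by_contra h
      push_neg at h
      have : (1 : ℝ) = 0 := by
        rw [← hlamS.2]
        exact Finset.sum_eq_zero fun i _ => h i
      norm_num at this
    · rw [hu'u, hu]
      have : ∑ i, lam i • v i = p := hplam
      rw [this]
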